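/- Let ψ : [0,∞) → [0,∞) be an increasing concave function with ψ(0) = 0 and ψ(t) → ∞ as t → ∞, satisfying condition (2.1) (hence of regular variation of index 0). Let H : (0,∞) → [0,∞) be nonincreasing with c_H := sup_{t>2} (1/ψ(t)) ∫_0^t H(s) ds < ∞. Then for every α > 1 there exists t₀ > 0 such that for all t ≥ t₀ the Lebesgue measure of the set {s ∈ (0,∞) : H(s) > 1/t} is at most t^α. -/

import Mathlib

open MeasureTheory Filter Set Topology
open scoped ENNReal NNReal

theorem psi_growth
    (ψ : ℝ → ℝ)
    (hψ_mono : MonotoneOn ψ (Set.Ici 0))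
    (hψ_conc : ConcaveOn ℝ (Set.Ici 0) ψ)
    (hψ_zero : ψ 0 = 0)
    (hψ_top : Tendsto ψ atTop atTop)
    (h21 : ∀ α : ℝ, 1 < α →
      ∃ A : ℝ, Tendsto (fun t : ℝ => ψ (t ^ α) / ψ t) atTop (𝓝 A))
    (ε : ℝ) (hε0 : 0 < ε) (hε1 : ε < 1) :
    ∃ C : ℝ, 1 ≤ C ∧ ∃ s₁ : ℝ, 1 ≤ s₁ ∧ ∀ s, s₁ ≤ s → ψ s ≤ C * s ^ ε := by
  -- linear bound : ψ u ≤ ψ 1 * u for u ≥ 1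
  have hlin : ∀ u : ℝ, 1 ≤ u → ψ u ≤ ψ 1 * u := by
    intro u hu
    have hu0 : (0:ℝ) < u := lt_of_lt_of_le one_pos hu
    have h := hψ_conc.2 (show u ∈ Set.Ici (0:ℝ) from hu0.le)
      (Set.self_mem_Ici)
      (show (0:ℝ) ≤ 1/u by positivity)
      (show (0:ℝ) ≤ 1 - 1/u by
        rw [sub_nonneg]; exact div_le_one_of_le₀ hu hu0.le)
      (by ring)
    simp only [smul_eq_mul, mul_zero, hψ_zero, add_zero] at h
    rw [one_div, inv_mul_cancel₀ (ne_of_gt hu0)] at h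
    calc ψ u = u * (u⁻¹ * ψ u) := by field_simp
    _ ≤ u * ψ 1 := mul_le_mul_of_nonneg_left h hu0.le
    _ = ψ 1 * u := mul_comm _ _
  set β : ℝ := 1/ε with hβ
  have hβ1 : 1 < β := (one_lt_div hε0).2 hε1
  obtain ⟨A, hA⟩ := h21 β hβ1
  have h1 : ∀ᶠ t in atTop, ψ (t ^ β) / ψ t ≤ |A| + 1 := by
    filter_upwards [hA.eventually (eventually_le_nhds (show A < |A| + 1 by
      have := le_abs_self A; linarith))] with t ht using ht
  have h2 : ∀ᶠ t in atTop, (1:ℝ) ≤ ψ t := hψ_top.eventually_ge_atTop 1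
  obtain ⟨T, hT⟩ := ((h1.and h2).and (eventually_ge_atTop (1:ℝ))).exists_forall_of_atTop
  set T' : ℝ := max T 1 with hT'
  have hT'1 : (1:ℝ) ≤ T' := le_max_right _ _
  have habs : (1:ℝ) ≤ |A| + 1 := by have := abs_nonneg A; linarith
  have hmax1 : (1:ℝ) ≤ max 1 (ψ 1) := le_max_left _ _
  refine ⟨(|A| + 1) * max 1 (ψ 1), by nlinarith, T' ^ β, ?_, ?_⟩
  · exact Real.one_le_rpow hT'1 (by linarith)
  · intro s hs
    have hs1 : (1:ℝ) ≤ s := le_trans (Real.one_le_rpow hT'1 (by linarith)) hs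
    have hs0 : (0:ℝ) < s := lt_of_lt_of_le one_pos hs1
    set t : ℝ := s ^ ε with ht
    have hβε : β * ε = 1 := by rw [hβ]; field_simp
    have htT : T' ≤ t := by
      have h := Real.rpow_le_rpow (by positivity) hs hε0.le
      rwa [← Real.rpow_mul (by linarith : (0:ℝ) ≤ T'), hβε, Real.rpow_one] at h
    have ht1 : (1:ℝ) ≤ t := le_trans hT'1 htT
    have htβ : t ^ β = s := by
      rw [ht, ← Real.rpow_mul hs0.le, mul_comm, hβε, Real.rpow_one]
    obtain ⟨⟨hr, hp⟩, htge1⟩ := hT t (le_trans (le_max_left _ _) htT)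
    have hp0 : (0:ℝ) < ψ t := lt_of_lt_of_le one_pos hp
    have : ψ (t ^ β) ≤ (|A| + 1) * ψ t := by
      rw [← div_le_iff₀ hp0] at *; linarith [hr]
    calc ψ s = ψ (t ^ β) := by rw [htβ]
    _ ≤ (|A| + 1) * ψ t := this
    _ ≤ (|A| + 1) * (ψ 1 * t) :=
        mul_le_mul_of_nonneg_left (hlin t ht1) (by linarith)
    _ ≤ (|A| + 1) * (max 1 (ψ 1) * t) := by
        have : ψ 1 * t ≤ max 1 (ψ 1) * t :=
          mul_le_mul_of_nonneg_right (le_max_right _ _) (by linarith)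
        nlinarith
    _ = (|A| + 1) * max 1 (ψ 1) * s ^ ε := by rw [← ht]; ring

/-- (Proposition 2.8 (a).)  Let `ψ` be an increasing concave
function with `ψ 0 = 0`, `ψ → ∞`, satisfying condition (2.1) (hence slowly
varying).  Let `H : (0,∞) → [0,∞)` be nonincreasing with
`c_H := sup_{t>2} (1/ψ t) ∫₀ᵗ H < ∞`.  Then for every `α > 1` there is
`t₀ > 0` such that for all `t ≥ t₀` the Lebesgue measure of
`{s > 0 : H s > 1/t}` is at most `t^α`. -/
theorem statement4
    (ψ : ℝ → ℝ)
    (hψ_mono : MonotoneOn ψ (Set.Ici 0))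
    (hψ_conc : ConcaveOn ℝ (Set.Ici 0) ψ)
    (hψ_zero : ψ 0 = 0)
    (hψ_top : Tendsto ψ atTop atTop)
    (h21 : ∀ α : ℝ, 1 < α →
      ∃ A : ℝ, Tendsto (fun t : ℝ => ψ (t ^ α) / ψ t) atTop (𝓝 A))
    (H : ℝ → ℝ)
    (hH_anti : AntitoneOn H (Set.Ioi 0))
    (hH_nonneg : ∀ s, 0 ≤ H s)
    (hcH : ∃ M : ℝ, ∀ t : ℝ, 2 < t →
      (∫⁻ s in Set.Ioc (0:ℝ) t, ENNReal.ofReal (H s)) ≤ ENNReal.ofReal (M * ψ t)) :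
    ∀ α : ℝ, 1 < α → ∃ t₀ > (0:ℝ), ∀ t : ℝ, t₀ ≤ t →
      volume {s : ℝ | 0 < s ∧ 1/t < H s} ≤ ENNReal.ofReal (t ^ α) := by
  have hψ0 : ∀ u : ℝ, 0 ≤ u → 0 ≤ ψ u := by
    intro u hu
    rw [← hψ_zero]
    exact hψ_mono (Set.self_mem_Ici) hu hu
  intro α hα
  obtain ⟨M', hM'⟩ := hcH
  set M : ℝ := max 0 M' with hMdef
  have hM0 : 0 ≤ M := le_max_left _ _
  have hM : ∀ t : ℝ, 2 < t →
      (∫⁻ s in Set.Ioc (0:ℝ) t, ENNReal.ofReal (H s)) ≤ ENNReal.ofReal (M * ψ t) := by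
    intro t ht
    refine le_trans (hM' t ht) (ENNReal.ofReal_le_ofReal ?_)
    exact mul_le_mul_of_nonneg_right (le_max_right _ _) (hψ0 t (by linarith))
  set ε : ℝ := (α - 1) / (2 * α) with hεdef
  have hε0 : 0 < ε := by apply div_pos <;> linarith
  have hε1 : ε < 1 := by
    rw [div_lt_one (by linarith)]; linarith
  obtain ⟨C, hC1, s₁, hs₁1, hCb⟩ :=
    psi_growth ψ hψ_mono hψ_conc hψ_zero hψ_top h21 ε hε0 hε1
  set K : ℝ := max 1 (M * C) with hKdef
  have hK1 : (1:ℝ) ≤ K := le_max_left _ _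
  refine ⟨max 2 (max s₁ (K ^ (2/(α-1)) + 1)), by positivity, ?_⟩
  intro t ht
  have ht2 : (2:ℝ) ≤ t := le_trans (le_max_left _ _) ht
  have hts₁ : s₁ ≤ t := le_trans (le_trans (le_max_left _ _) (le_max_right _ _)) ht
  have htK : K ^ (2/(α-1)) < t :=
    lt_of_lt_of_le (by linarith [le_trans (le_trans (le_max_right _ _) (le_max_right _ _)) ht])
      le_rfl
  have ht1 : (1:ℝ) < t := by linarith
  have ht0 : (0:ℝ) < t := by linarith
  have hta : t < t ^ α := by
    nth_rewrite 1 [← Real.rpow_one t]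
    exact Real.rpow_lt_rpow_of_exponent_lt ht1 hα
  have hta0 : (0:ℝ) < t ^ α := by positivity
  by_contra hcon
  push_neg at hcon
  -- Step A : there is s₀ ≥ t^α in the set
  obtain ⟨s₀, ⟨hs₀pos, hs₀H⟩, hs₀ge⟩ :
      ∃ s₀, (0 < s₀ ∧ 1/t < H s₀) ∧ t ^ α ≤ s₀ := by
    by_contra h
    push_neg at h
    have hsub : {s : ℝ | 0 < s ∧ 1/t < H s} ⊆ Set.Ioo 0 (t ^ α) := by
      intro x hx
      exact ⟨hx.1, h x hx⟩
    have hm := measure_mono (μ := volume) hsub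
    rw [Real.volume_Ioo, sub_zero] at hm
    exact absurd hm hcon.not_ge
  -- Step B : Ioc 0 (t^α) is contained in the set, so H > 1/t there
  have hBig : ∀ x ∈ Set.Ioc (0:ℝ) (t ^ α), 1/t < H x := by
    intro x hx
    exact lt_of_lt_of_le hs₀H (hH_anti hx.1 hs₀pos (le_trans hx.2 hs₀ge))
  -- Step C : lower bound for the integral
  have hlow : ENNReal.ofReal (t ^ (α - 1)) ≤
      ∫⁻ s in Set.Ioc (0:ℝ) (t ^ α), ENNReal.ofReal (H s) := by
    have h1 : ∫⁻ _ in Set.Ioc (0:ℝ) (t ^ α), ENNReal.ofReal (1/t) =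
        ENNReal.ofReal (1/t) * ENNReal.ofReal (t ^ α) := by
      rw [setLIntegral_const, Real.volume_Ioc, sub_zero]
    have h2 : (∫⁻ _ in Set.Ioc (0:ℝ) (t ^ α), ENNReal.ofReal (1/t)) ≤
        ∫⁻ s in Set.Ioc (0:ℝ) (t ^ α), ENNReal.ofReal (H s) :=
      setLIntegral_mono' measurableSet_Ioc
        (fun x hx => ENNReal.ofReal_le_ofReal (hBig x hx).le)
    rw [h1, ← ENNReal.ofReal_mul (by positivity)] at h2
    have h3 : 1/t * t ^ α = t ^ (α - 1) := by
      rw [Real.rpow_sub ht0, Real.rpow_one]; ring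
    rwa [h3] at h2
  -- Step D : upper bound for the integral and contradiction
  have hup : (∫⁻ s in Set.Ioc (0:ℝ) (t ^ α), ENNReal.ofReal (H s)) ≤
      ENNReal.ofReal (K * t ^ ((α - 1)/2)) := by
    refine le_trans (hM (t ^ α) (by linarith)) (ENNReal.ofReal_le_ofReal ?_)
    have hψb : ψ (t ^ α) ≤ C * (t ^ α) ^ ε := hCb _ (le_trans hts₁ hta.le)
    have hre : (t ^ α) ^ ε = t ^ ((α - 1)/2) := by
      rw [← Real.rpow_mul ht0.le]
      congr 1
      field_simp [hεdef]
      rw [hεdef]; field_simp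
    calc M * ψ (t ^ α) ≤ M * (C * (t ^ α) ^ ε) :=
          mul_le_mul_of_nonneg_left hψb hM0
    _ = (M * C) * t ^ ((α - 1)/2) := by rw [hre]; ring
    _ ≤ K * t ^ ((α - 1)/2) :=
          mul_le_mul_of_nonneg_right (le_max_right _ _) (by positivity)
  have hreal : t ^ (α - 1) ≤ K * t ^ ((α - 1)/2) := by
    have := le_trans hlow hup
    rwa [ENNReal.ofReal_le_ofReal_iff (by positivity)] at this
  have hsplit : t ^ (α - 1) = t ^ ((α - 1)/2) * t ^ ((α - 1)/2) := by
    rw [← Real.rpow_add ht0]; ring_nf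
  have hhalfpos : (0:ℝ) < t ^ ((α - 1)/2) := by positivity
  have hKle : t ^ ((α - 1)/2) ≤ K := by
    rw [hsplit] at hreal
    exact le_of_mul_le_mul_right (by linarith) hhalfpos
  have hKlt : K < t ^ ((α - 1)/2) := by
    have h := Real.rpow_lt_rpow (by positivity : (0:ℝ) ≤ K ^ (2/(α-1))) htK
      (by linarith : (0:ℝ) < (α-1)/2)
    have hexp : (2/(α-1)) * ((α-1)/2) = 1 := by
      have hne : α - 1 ≠ 0 := by linarith
      field_simp
    rwa [← Real.rpow_mul (by linarith : (0:ℝ) ≤ K), hexp, Real.rpow_one] at h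
  linarith
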